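/- For every integer n ≥ 1, T_n(x) = M_n(x²) + ∑_{k=0}^{n−1} C(n,k) M_k(x²) (x−1)^{n−k} (x+1)^{n−k−1}, where C(n,k) is the binomial coefficient, as an identity of polynomials. -/

import Mathlib

/-- The numbers T(n,k) defined by T(1,1) = 1, T(1,k) = 0 for k ≠ 1, and the
recurrence T(n+1,k) = k·T(n,k) + T(n,k-1) + (2n-k+2)·T(n,k-2) for n ≥ 1.
(The value at n = 0 encodes T_0(x) = 1.) -/
def Tc : ℕ → ℤ → ℤ
  | 0, k => if k = 0 then 1 else 0
  | 1, k => if k = 1 then 1 else 0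
  | (n+2), k => k * Tc (n+1) k + Tc (n+1) (k-1) + (2*((n : ℤ)+1) - k + 2) * Tc (n+1) (k-2)

/-- The polynomial T_n(x) = ∑_(k=1)^(2n-1) T(n,k) x^k for n ≥ 1, with T_0(x) = 1. -/
noncomputable def Tpoly (n : ℕ) : Polynomial ℤ :=
  if n = 0 then 1 else ∑ k ∈ Finset.Icc 1 (2*n - 1), Polynomial.C (Tc n k) * Polynomial.X ^ k

/-- The polynomials N_n(x) defined by N_0(x) = 1 and
N_(n+1)(x) = (2n+1)x·N_n(x) + 2x(1-x)·N_n'(x). -/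
noncomputable def Npoly : ℕ → Polynomial ℤ
  | 0 => 1
  | (n+1) => Polynomial.C (2*(n : ℤ)+1) * Polynomial.X * Npoly n
      + 2 * Polynomial.X * (1 - Polynomial.X) * Polynomial.derivative (Npoly n)

/-- The reciprocal polynomial M_n(x) = x^n N_n(1/x) = ∑_(k=1)^(n) N(n,k) x^(n-k)
for n ≥ 1, with M_0(x) = 1; here N(n,k) is the coefficient of x^k in N_n(x). -/
noncomputable def Mpoly (n : ℕ) : Polynomial ℤ :=
  if n = 0 then 1
  else ∑ k ∈ Finset.Icc 1 n, Polynomial.C ((Npoly n).coeff k) * Polynomial.X ^ (n-k)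

open Polynomial Finset

lemma Tc_zero : ∀ (n : ℕ), 1 ≤ n → ∀ (k : ℤ), (k ≤ 0 ∨ 2*(n:ℤ) ≤ k) → Tc n k = 0 := by
  intro n
  induction n with
  | zero => omega
  | succ m ih =>
    intro _ k hk
    match m, ih with
    | 0, _ => simp only [Tc]; split <;> omega
    | (m+1), ih =>
      have h1 : Tc (m+1) k = 0 := ih (by omega) k (by push_cast at hk ⊢; omega)
      have h2 : Tc (m+1) (k-1) = 0 := ih (by omega) (k-1) (by push_cast at hk ⊢; omega)
      have h3 : Tc (m+1) (k-2) = 0 := ih (by omega) (k-2) (by push_cast at hk ⊢; omega)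
      simp only [Tc, h1, h2, h3]; ring

lemma Tcoeff (n : ℕ) (hn : 1 ≤ n) (j : ℕ) : (Tpoly n).coeff j = Tc n (j : ℤ) := by
  rw [Tpoly, if_neg (by omega)]
  rw [Polynomial.finset_sum_coeff]
  simp only [Polynomial.coeff_C_mul, Polynomial.coeff_X_pow, mul_ite, mul_one, mul_zero]
  rw [Finset.sum_ite_eq (Finset.Icc 1 (2*n-1)) j (fun k => Tc n (k:ℤ))]
  split_ifs with h
  · rfl
  · rw [Finset.mem_Icc] at h
    exact (Tc_zero n hn j (by push_cast; omega)).symm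

lemma Tc_rec (m : ℕ) (k : ℤ) : Tc (m+2) k = k * Tc (m+1) k + Tc (m+1) (k-1)
    + (2*((m : ℤ)+1) - k + 2) * Tc (m+1) (k-2) := rfl

lemma Tpoly_rec (n : ℕ) (hn : 1 ≤ n) :
    Tpoly (n+1) = Tpoly n * X ^ 1 + C (2*(n:ℤ)) * (Tpoly n * X ^ 2)
      + derivative (Tpoly n) * X ^ 1 - derivative (Tpoly n) * X ^ 3 := by
  obtain ⟨m, rfl⟩ : ∃ m, n = m + 1 := ⟨n - 1, by omega⟩
  ext j
  rw [Tcoeff (m+2) (by omega) j, Tc_rec m (j:ℤ)]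
  simp only [Polynomial.coeff_add, Polynomial.coeff_sub, Polynomial.coeff_C_mul,
    Polynomial.coeff_mul_X_pow', Polynomial.coeff_derivative, Tcoeff (m+1) (by omega)]
  rcases j with _ | _ | _ | j
  · have h1 := Tc_zero (m+1) (by omega) (-1) (by omega)
    have h2 := Tc_zero (m+1) (by omega) (-2) (by omega)
    norm_num [h1, h2]
  · have h1 := Tc_zero (m+1) (by omega) (-1) (by omega)
    norm_num [h1]; ring
  · norm_num
    push_cast
    ring
  · simp only [if_pos (by omega : 1 ≤ j + 3), if_pos (by omega : 2 ≤ j + 3),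
      if_pos (by omega : 3 ≤ j + 3),
      show j + 3 - 1 = j + 2 from rfl, show j + 3 - 2 = j + 1 from rfl,
      show j + 3 - 3 = j from rfl]
    push_cast
    ring

lemma Npoly_eq (n : ℕ) : Npoly (n+1) = C (2*(n:ℤ)+1) * (Npoly n * X ^ 1)
    + 2 * (derivative (Npoly n) * X ^ 1) - 2 * (derivative (Npoly n) * X ^ 2) := by
  show C (2*(n : ℤ)+1) * X * Npoly n + 2 * X * (1 - X) * derivative (Npoly n) = _
  ring

lemma Ncoeff_zero (n : ℕ) (hn : 1 ≤ n) : (Npoly n).coeff 0 = 0 := by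
  obtain ⟨m, rfl⟩ : ∃ m, n = m + 1 := ⟨n - 1, by omega⟩
  rw [Npoly_eq]
  simp [Polynomial.coeff_mul_X_pow']

lemma Ncoeff_high : ∀ (n k : ℕ), n < k → (Npoly n).coeff k = 0 := by
  intro n
  induction n with
  | zero =>
    intro k hk
    show (1 : Polynomial ℤ).coeff k = 0
    simp [Polynomial.coeff_one]; omega
  | succ m ih =>
    intro k hk
    rw [Npoly_eq]
    obtain ⟨j, rfl⟩ : ∃ j, k = j + 2 := ⟨k - 2, by omega⟩
    simp only [Polynomial.coeff_sub, Polynomial.coeff_add, Polynomial.coeff_C_mul,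
      Polynomial.coeff_mul_X_pow', Polynomial.coeff_derivative,
      show (2 : Polynomial ℤ) = C 2 from rfl]
    rw [if_pos (by omega : 1 ≤ j + 2), if_pos (by omega : 2 ≤ j + 2)]
    rw [show j + 2 - 1 = j + 1 from rfl, show j + 2 - 2 = j from rfl]
    rw [ih (j+1) (by omega), ih (j+2) (by omega)]
    simp

lemma Ncoeff_rec (n j : ℕ) : (Npoly (n+1)).coeff (j+1)
    = (2*(n:ℤ)+1) * (Npoly n).coeff j + 2*((j:ℤ)+1) * (Npoly n).coeff (j+1)
      - 2*(j:ℤ) * (Npoly n).coeff j := by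
  rw [Npoly_eq]
  simp only [Polynomial.coeff_sub, Polynomial.coeff_add, Polynomial.coeff_C_mul,
    Polynomial.coeff_mul_X_pow', Polynomial.coeff_derivative,
    show (2 : Polynomial ℤ) = C 2 from rfl]
  rw [if_pos (by omega : 1 ≤ j + 1)]
  rcases j with _ | j
  · norm_num
  · rw [if_pos (by omega : 2 ≤ j + 1 + 1)]
    norm_num
    push_cast
    ring

lemma Mpoly_eq (n : ℕ) (hn : 1 ≤ n) :
    Mpoly n = ∑ j ∈ Finset.range n, C ((Npoly n).coeff (n-j)) * X ^ j := by
  rw [Mpoly, if_neg (by omega)]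
  refine Finset.sum_nbij' (fun k => n - k) (fun j => n - j) ?_ ?_ ?_ ?_ ?_
  · intro a ha; simp only [Finset.mem_Icc] at ha; simp only [Finset.mem_range]; omega
  · intro a ha; simp only [Finset.mem_range] at ha; simp only [Finset.mem_Icc]; omega
  · intro a ha; simp only [Finset.mem_Icc] at ha; show n - (n - a) = a; omega
  · intro a ha; simp only [Finset.mem_range] at ha; show n - (n - a) = a; omega
  · intro a ha; simp only [Finset.mem_Icc] at ha
    rw [show n - (n - a) = a by omega]

lemma Mcoeff (n : ℕ) (hn : 1 ≤ n) (j : ℕ) :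
    (Mpoly n).coeff j = (Npoly n).coeff (n - j) := by
  rw [Mpoly_eq n hn, Polynomial.finset_sum_coeff]
  simp only [Polynomial.coeff_C_mul, Polynomial.coeff_X_pow, mul_ite, mul_one, mul_zero]
  rw [Finset.sum_ite_eq (Finset.range n) j (fun k => (Npoly n).coeff (n-k))]
  split_ifs with h
  · rfl
  · rw [Finset.mem_range] at h
    rw [show n - j = 0 by omega, Ncoeff_zero n hn]

lemma Npoly_one : Npoly 1 = X := by
  show C (2*(0:ℤ)+1) * X * Npoly 0 + 2 * X * (1 - X) * derivative (Npoly 0) = X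
  show C (2*(0:ℤ)+1) * X * 1 + 2 * X * (1 - X) * derivative 1 = X
  simp

lemma Mpoly_zero : Mpoly 0 = 1 := by rw [Mpoly, if_pos rfl]

lemma Mpoly_one : Mpoly 1 = 1 := by
  rw [Mpoly_eq 1 le_rfl]
  simp [Npoly_one]

lemma Mrec (n : ℕ) : Mpoly (n+1) = C (2*(n:ℤ)) * (Mpoly n * X^1) + Mpoly n
    + 2 * (derivative (Mpoly n) * X^1) - 2 * (derivative (Mpoly n) * X^2) := by
  rcases n with _ | m
  · rw [Mpoly_one, Mpoly_zero]
    simp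
  · ext j
    rw [Mcoeff (m+2) (by omega) j]
    simp only [Polynomial.coeff_sub, Polynomial.coeff_add,
      show (2 : Polynomial ℤ) = C 2 from rfl, Polynomial.coeff_C_mul,
      Polynomial.coeff_mul_X_pow', Polynomial.coeff_derivative, Mcoeff (m+1) (by omega)]
    rcases j with _ | _ | j
    · -- j = 0
      norm_num
      rw [show m + 2 = (m+1) + 1 from rfl, Ncoeff_rec (m+1) (m+1)]
      rw [Ncoeff_high (m+1) (m+2) (by omega)]
      push_cast; ring
    · -- j = 1
      norm_num
      rw [show m + 2 = (m+1) + 1 from rfl, Ncoeff_rec (m+1) m]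
      push_cast; ring
    · -- j = j + 2
      rw [if_pos (by omega : 1 ≤ j + 1 + 1), if_pos (by omega : 2 ≤ j + 1 + 1),
        show j + 1 + 1 - 1 = j + 1 from rfl, show j + 1 + 1 - 2 = j from rfl,
        show j + 1 + 1 = j + 2 from rfl]
      rcases Nat.lt_or_ge j m with h | h
      · -- j < m
        rw [show m + 2 - (j + 2) = (m - j - 1) + 1 by omega,
          show m + 1 - (j + 1) = (m - j - 1) + 1 by omega,
          show m + 1 - (j + 2) = m - j - 1 by omega,
          show m + 2 = (m+1) + 1 from rfl, Ncoeff_rec (m+1) (m - j - 1)]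
        have ht : ((m - j - 1 : ℕ) : ℤ) = (m : ℤ) - j - 1 := by push_cast; omega
        rw [ht]
        push_cast; ring
      · -- j >= m : everything vanishes
        rw [show m + 2 - (j + 2) = 0 by omega, show m + 1 - (j + 1) = 0 by omega,
          show m + 1 - (j + 2) = 0 by omega, Ncoeff_zero (m+2) (by omega),
          Ncoeff_zero (m+1) (by omega)]
        simp

lemma keyA (n : ℕ) :
    (X - X^3) * derivative ((Mpoly n).comp (X^2))
      + (X + C (2*(n:ℤ)) * X^2) * (Mpoly n).comp (X^2)
    = (Mpoly (n+1)).comp (X^2) + (X - 1) * (Mpoly n).comp (X^2) := by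
  rw [Mrec n, derivative_comp]
  simp only [Polynomial.add_comp, Polynomial.mul_comp, Polynomial.sub_comp,
    Polynomial.pow_comp, Polynomial.X_comp, Polynomial.C_comp, Polynomial.one_comp,
    Polynomial.ofNat_comp, Polynomial.derivative_X_pow, Nat.cast_ofNat, map_ofNat]
  ring

lemma keyB (n k b : ℕ) (h : n = k + b + 1) :
    (X - X^3) * derivative ((Mpoly k).comp (X^2) * (X-1)^(b+1) * (X+1)^b)
      + (X + C (2*(n:ℤ)) * X^2) * ((Mpoly k).comp (X^2) * (X-1)^(b+1) * (X+1)^b)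
    = (Mpoly (k+1)).comp (X^2) * (X-1)^(b+1) * (X+1)^b
      + (Mpoly k).comp (X^2) * (X-1)^(b+1+1) * (X+1)^(b+1) := by
  have hn : C (2*(n:ℤ)) = C (2*(k:ℤ)) + C (2*(b:ℤ)) + C 2 := by
    rw [← map_add, ← map_add]; congr 1; push_cast [h]; ring
  rw [hn, Mrec k]
  rcases b with _ | c
  · simp only [zero_add, pow_one, pow_zero, mul_one, Polynomial.derivative_mul,
      Polynomial.derivative_sub, Polynomial.derivative_X, Polynomial.derivative_one,
      sub_zero, Polynomial.add_comp, Polynomial.mul_comp, Polynomial.sub_comp,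
      Polynomial.pow_comp, Polynomial.X_comp, Polynomial.C_comp, Polynomial.one_comp,
      Polynomial.derivative_X_pow, Nat.cast_ofNat, map_ofNat, Nat.cast_zero, mul_zero,
      map_zero, Polynomial.derivative_comp, Polynomial.ofNat_comp]
    ring
  · simp only [Polynomial.derivative_mul, Polynomial.derivative_pow,
      Polynomial.derivative_sub, Polynomial.derivative_add, Polynomial.derivative_X,
      Polynomial.derivative_one, sub_zero, add_zero, mul_one,
      Polynomial.add_comp, Polynomial.mul_comp, Polynomial.sub_comp,
      Polynomial.pow_comp, Polynomial.X_comp, Polynomial.C_comp, Polynomial.one_comp,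
      Polynomial.derivative_X_pow, Nat.cast_ofNat, map_ofNat,
      Nat.add_sub_cancel, Nat.cast_add, Nat.cast_one, map_add, map_one, map_mul,
      Polynomial.derivative_comp, Polynomial.ofNat_comp, Polynomial.derivative_neg]
    ring

lemma Lcomb (w1 w2 A : Polynomial ℤ) (s : Finset ℕ) (c : ℕ → ℤ) (t : ℕ → Polynomial ℤ) :
    w1 * derivative (A + ∑ k ∈ s, C (c k) * t k) + w2 * (A + ∑ k ∈ s, C (c k) * t k)
    = (w1 * derivative A + w2 * A)
      + ∑ k ∈ s, C (c k) * (w1 * derivative (t k) + w2 * t k) := by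
  have h2 : ∑ k ∈ s, C (c k) * (w1 * derivative (t k) + w2 * t k)
      = (∑ k ∈ s, w1 * derivative (C (c k) * t k)) + ∑ k ∈ s, w2 * (C (c k) * t k) := by
    rw [← Finset.sum_add_distrib]
    exact Finset.sum_congr rfl (fun k hk => by rw [Polynomial.derivative_C_mul]; ring)
  rw [derivative_add, derivative_sum, h2, mul_add, mul_add, Finset.mul_sum, Finset.mul_sum]
  ring

lemma sumstep (m : ℕ) :
    (X - 1) * (Mpoly m).comp (X^2)
      + ∑ k ∈ range m, C ((m.choose k : ℤ)) *
          ((Mpoly (k+1)).comp (X^2) * (X-1)^(m-k) * (X+1)^(m-k-1)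
            + (Mpoly k).comp (X^2) * (X-1)^(m-k+1) * (X+1)^(m-k))
    = ∑ k ∈ range (m+1), C (((m+1).choose k : ℤ)) * ((Mpoly k).comp (X^2)
        * (X-1)^(m+1-k) * (X+1)^(m-k)) := by
  rw [Finset.sum_range_succ']
  have h1 : ∀ i ∈ Finset.range m,
      C ((((m+1).choose (i+1)) : ℤ)) * ((Mpoly (i+1)).comp (X^2) * (X-1)^(m+1-(i+1)) * (X+1)^(m-(i+1)))
      = C ((m.choose i : ℤ)) * ((Mpoly (i+1)).comp (X^2) * (X-1)^(m-i) * (X+1)^(m-i-1))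
        + C ((m.choose (i+1) : ℤ)) * ((Mpoly (i+1)).comp (X^2) * (X-1)^(m+1-(i+1)) * (X+1)^(m-(i+1))) := by
    intro i hi
    rw [Nat.choose_succ_succ, show m+1-(i+1) = m-i by omega, show m-(i+1) = m-i-1 by omega]
    push_cast
    rw [map_add]
    ring
  rw [Finset.sum_congr rfl h1, Finset.sum_add_distrib]
  simp only [mul_add]
  rw [Finset.sum_add_distrib]
  have e1 := Finset.sum_range_succ
    (fun k => C ((m.choose k : ℤ)) * ((Mpoly k).comp (X^2) * (X-1)^(m+1-k) * (X+1)^(m-k))) m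
  have e2 := Finset.sum_range_succ'
    (fun k => C ((m.choose k : ℤ)) * ((Mpoly k).comp (X^2) * (X-1)^(m+1-k) * (X+1)^(m-k))) m
  have e3 : ∑ k ∈ range m, C ((m.choose k : ℤ)) * ((Mpoly k).comp (X^2) * (X-1)^(m+1-k) * (X+1)^(m-k))
      = ∑ k ∈ range m, C ((m.choose k : ℤ)) * ((Mpoly k).comp (X^2) * (X-1)^(m-k+1) * (X+1)^(m-k)) :=
    Finset.sum_congr rfl (fun k hk => by
      rw [show m+1-k = m-k+1 by have := Finset.mem_range.mp hk; omega])
  have key := e1.symm.trans e2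
  rw [e3] at key
  simp only [Nat.choose_self, Nat.choose_zero_right, Nat.sub_self, Nat.sub_zero,
    show m+1-m = 1 by omega, pow_one, pow_zero, mul_one, Nat.cast_one, map_one, one_mul] at key ⊢
  linear_combination key

/-- For n ≥ 1,
T_n(x) = M_n(x²) + ∑_(k=0)^(n-1) C(n,k) M_k(x²) (x-1)^(n-k) (x+1)^(n-k-1). -/
theorem stmt13 (n : ℕ) (hn : 1 ≤ n) :
    Tpoly n = (Mpoly n).comp (Polynomial.X ^ 2)
      + ∑ k ∈ Finset.range n,
          Polynomial.C ((n.choose k : ℤ)) * (Mpoly k).comp (Polynomial.X ^ 2)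
            * (Polynomial.X - 1) ^ (n-k) * (Polynomial.X + 1) ^ (n-k-1) := by
  induction n with
  | zero => omega
  | succ m ih =>
    rcases Nat.eq_zero_or_pos m with rfl | hm
    · -- base case n = 1
      have t1 : Tc 1 1 = 1 := by simp [Tc]
      norm_num [Tpoly, Finset.sum_range_one, t1, Mpoly_one, Mpoly_zero, Finset.Icc_self,
        Finset.sum_singleton]
    · -- inductive step, m ≥ 1
      have ihm := ih hm
      have hrec : Tpoly (m+1) = (X - X^3) * derivative (Tpoly m)
          + (X + C (2*(m:ℤ)) * X^2) * Tpoly m := by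
        rw [Tpoly_rec m hm]; ring
      have hS : Tpoly m = (Mpoly m).comp (X^2)
          + ∑ k ∈ range m, C ((m.choose k : ℤ)) *
              ((Mpoly k).comp (X^2) * (X-1)^(m-k) * (X+1)^(m-k-1)) := by
        rw [ihm]
        congr 1
        exact Finset.sum_congr rfl (fun k _ => by ring)
      rw [hrec, hS,
        Lcomb (X - X^3) (X + C (2*(m:ℤ)) * X^2) ((Mpoly m).comp (X^2)) (range m)
          (fun k => (m.choose k : ℤ))
          (fun k => (Mpoly k).comp (X^2) * (X-1)^(m-k) * (X+1)^(m-k-1)),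
        keyA m]
      have h2 : ∀ k ∈ range m,
          (X - X^3) * derivative ((Mpoly k).comp (X^2) * (X-1)^(m-k) * (X+1)^(m-k-1))
            + (X + C (2*(m:ℤ)) * X^2) * ((Mpoly k).comp (X^2) * (X-1)^(m-k) * (X+1)^(m-k-1))
          = (Mpoly (k+1)).comp (X^2) * (X-1)^(m-k) * (X+1)^(m-k-1)
            + (Mpoly k).comp (X^2) * (X-1)^(m-k+1) * (X+1)^(m-k) := by
        intro k hk
        have hkm : k < m := Finset.mem_range.mp hk
        obtain ⟨b, hb⟩ : ∃ b, m - k = b + 1 := ⟨m - k - 1, by omega⟩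
        have hb1 : m - k - 1 = b := by omega
        rw [hb1, hb]
        exact keyB m k b (by omega)
      rw [Finset.sum_congr rfl (fun k hk => by rw [h2 k hk])]
      have hR : ∑ k ∈ range (m+1), C (((m+1).choose k : ℤ)) * (Mpoly k).comp (X^2)
            * (X-1)^(m+1-k) * (X+1)^(m+1-k-1)
          = ∑ k ∈ range (m+1), C (((m+1).choose k : ℤ)) * ((Mpoly k).comp (X^2)
            * (X-1)^(m+1-k) * (X+1)^(m-k)) :=
        Finset.sum_congr rfl (fun k _ => by rw [show m+1-k-1 = m-k by omega]; ring)
      rw [hR, ← sumstep m]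
      ring
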